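/- Let Γ be a subgroup of the group of linear automorphisms of V preserving q, acting on ℍ = ℙ(V⁺). For a point a ∈ ℍ let Λ_a ⊆ Abs be the set of all points of Abs that are accumulation points of the orbit Γ·a in ℙ(V). Then for any two points a, b ∈ ℍ one has Λ_a = Λ_b. -/

import Mathlib

/- STATEMENT 8: Let Γ be a subgroup of the group of linear automorphisms of V preserving q,
acting on ℍ = ℙ(V⁺).  For a point a ∈ ℍ let Λ_a ⊆ Abs be the set of all points of Abs
that are accumulation points of the orbit Γ·a in ℙ(V).  Then for any two points
a, b ∈ ℍ one has Λ_a = Λ_b. -/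

noncomputable instance projectivizationTopology (K W : Type*) [DivisionRing K] [AddCommGroup W]
    [Module K W] [TopologicalSpace W] : TopologicalSpace (Projectivization K W) :=
  inferInstanceAs (TopologicalSpace (Quotient (projectivizationSetoid K W)))

variable {V : Type*} [NormedAddCommGroup V] [NormedSpace ℝ V] [FiniteDimensional ℝ V]

/-- `q` has signature `(1, n)`. -/
def hasSigOneN (n : ℕ) (B : V →ₗ[ℝ] V →ₗ[ℝ] ℝ) : Prop :=
  ∃ b : Module.Basis (Fin (n + 1)) ℝ V,
    (∀ i j, i ≠ j → B (b i) (b j) = 0) ∧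
    (0 < B (b 0) (b 0)) ∧ ∀ i, i ≠ 0 → B (b i) (b i) < 0

/-- The hyperbolic space `ℍ = ℙ(V⁺)`. -/
def hypSet (B : V →ₗ[ℝ] V →ₗ[ℝ] ℝ) : Set (Projectivization ℝ V) :=
  {p | 0 < B p.rep p.rep}

/-- The absolute `Abs = {[x] ∈ ℙ(V) : q(x,x) = 0}`. -/
def absSet (B : V →ₗ[ℝ] V →ₗ[ℝ] ℝ) : Set (Projectivization ℝ V) :=
  {p | B p.rep p.rep = 0}

/-- The action of a linear automorphism of `V` on `ℙ(V)`. -/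
noncomputable def pmap (γ : V ≃ₗ[ℝ] V) : Projectivization ℝ V → Projectivization ℝ V :=
  Projectivization.map (γ : V →ₗ[ℝ] V) γ.injective

/-- The orbit `Γ·a` in `ℙ(V)`. -/
def porbit (Γ : Subgroup (V ≃ₗ[ℝ] V)) (a : Projectivization ℝ V) :
    Set (Projectivization ℝ V) :=
  {y | ∃ γ ∈ Γ, y = pmap γ a}

/-- `Λ_a`: the points of the absolute that are accumulation points of the orbit `Γ·a`. -/
def limitSetOf (B : V →ₗ[ℝ] V →ₗ[ℝ] ℝ) (Γ : Subgroup (V ≃ₗ[ℝ] V))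
    (a : Projectivization ℝ V) : Set (Projectivization ℝ V) :=
  {x ∈ absSet B | x ∈ closure (porbit Γ a \ {x})}

/-! ### Auxiliary lemmas -/

section Aux

lemma B_smul_smul (B : V →ₗ[ℝ] V →ₗ[ℝ] ℝ) (c d : ℝ) (w w' : V) :
    B (c • w) (d • w') = (c * d) * B w w' := by
  simp only [map_smul, LinearMap.smul_apply, smul_eq_mul]
  ring

lemma B_sum {N : ℕ} (B : V →ₗ[ℝ] V →ₗ[ℝ] ℝ) (b : Module.Basis (Fin N) ℝ V)
    (hdiag : ∀ i j, i ≠ j → B (b i) (b j) = 0) (x y : V) :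
    B x y = ∑ i, B (b i) (b i) * (b.repr x i * b.repr y i) := by
  conv_lhs => rw [← b.sum_repr x, ← b.sum_repr y]
  simp only [map_sum, map_smul, LinearMap.sum_apply, LinearMap.smul_apply, smul_eq_mul]
  refine Finset.sum_congr rfl fun i _ => ?_
  rw [Finset.sum_eq_single i]
  · ring
  · intro j _ hj
    rw [hdiag j i hj]; ring
  · intro h; exact absurd (Finset.mem_univ i) h

lemma nonpos_of_coord0 {n : ℕ} (B : V →ₗ[ℝ] V →ₗ[ℝ] ℝ) (b : Module.Basis (Fin (n + 1)) ℝ V)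
    (hdiag : ∀ i j, i ≠ j → B (b i) (b j) = 0)
    (hneg : ∀ i, i ≠ 0 → B (b i) (b i) < 0)
    (x : V) (hx0 : b.repr x 0 = 0) :
    B x x ≤ 0 ∧ (B x x = 0 → x = 0) := by
  have hterm : ∀ i : Fin (n + 1), B (b i) (b i) * (b.repr x i * b.repr x i) ≤ 0 := by
    intro i
    rcases eq_or_ne i 0 with rfl | hi
    · rw [hx0]; simp
    · have h1 := hneg i hi
      nlinarith [mul_self_nonneg (b.repr x i)]
  constructor
  · rw [B_sum B b hdiag]
    exact Finset.sum_nonpos fun i _ => hterm i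
  · intro hxx
    have h0 : ∀ i ∈ Finset.univ, B (b i) (b i) * (b.repr x i * b.repr x i) = 0 := by
      rw [B_sum B b hdiag] at hxx
      exact (Finset.sum_eq_zero_iff_of_nonpos fun i _ => hterm i).mp hxx
    refine b.ext_elem fun i => ?_
    rcases eq_or_ne i 0 with rfl | hi
    · simpa using hx0
    · have hi0 := h0 i (Finset.mem_univ i)
      have hd := (hneg i hi).ne
      rcases mul_eq_zero.mp hi0 with h | h
      · exact absurd h hd
      · simpa using mul_self_eq_zero.mp h

lemma coord0_ne {n : ℕ} (B : V →ₗ[ℝ] V →ₗ[ℝ] ℝ) (b : Module.Basis (Fin (n + 1)) ℝ V)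
    (hdiag : ∀ i j, i ≠ j → B (b i) (b j) = 0)
    (hneg : ∀ i, i ≠ 0 → B (b i) (b i) < 0)
    (z : V) (hz : z ≠ 0) (hnull : B z z = 0) : b.repr z 0 ≠ 0 :=
  fun h => hz ((nonpos_of_coord0 B b hdiag hneg z h).2 hnull)

lemma B_expand_sub (B : V →ₗ[ℝ] V →ₗ[ℝ] ℝ) (t : ℝ) (w z : V) :
    B (w - t • z) (w - t • z) = B w w - t * B w z - t * B z w + t * t * B z z := by
  simp only [map_sub, map_smul, LinearMap.sub_apply, LinearMap.smul_apply, smul_eq_mul]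
  ring

lemma pos_not_orth {n : ℕ} (B : V →ₗ[ℝ] V →ₗ[ℝ] ℝ) (b : Module.Basis (Fin (n + 1)) ℝ V)
    (hsymm : ∀ x y, B x y = B y x)
    (hdiag : ∀ i j, i ≠ j → B (b i) (b j) = 0)
    (hneg : ∀ i, i ≠ 0 → B (b i) (b i) < 0)
    (z w : V) (hz : z ≠ 0) (hznull : B z z = 0)
    (hw : 0 < B w w) (horth : B z w = 0) : False := by
  have hz0 := coord0_ne B b hdiag hneg z hz hznull
  set t := b.repr w 0 / b.repr z 0 with ht
  have hcoord : b.repr (w - t • z) 0 = 0 := by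
    rw [map_sub, map_smul]
    simp only [Finsupp.sub_apply, Finsupp.smul_apply, smul_eq_mul]
    rw [ht]; field_simp; ring
  have hwz : B w z = 0 := by rw [hsymm w z]; exact horth
  have hBuu : B (w - t • z) (w - t • z) = B w w := by
    rw [B_expand_sub, horth, hwz, hznull]; ring
  have hle := (nonpos_of_coord0 B b hdiag hneg _ hcoord).1
  rw [hBuu] at hle
  exact absurd hw (not_lt.mpr hle)

lemma null_orth {n : ℕ} (B : V →ₗ[ℝ] V →ₗ[ℝ] ℝ) (b : Module.Basis (Fin (n + 1)) ℝ V)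
    (hsymm : ∀ x y, B x y = B y x)
    (hdiag : ∀ i j, i ≠ j → B (b i) (b j) = 0)
    (hneg : ∀ i, i ≠ 0 → B (b i) (b i) < 0)
    (z z' : V) (hz : z ≠ 0) (hz' : z' ≠ 0)
    (h1 : B z z = 0) (h2 : B z' z' = 0) (horth : B z z' = 0) :
    ∃ c : ℝ, c ≠ 0 ∧ z' = c • z := by
  have hz0 := coord0_ne B b hdiag hneg z hz h1
  set t := b.repr z' 0 / b.repr z 0 with ht
  have hcoord : b.repr (z' - t • z) 0 = 0 := by
    rw [map_sub, map_smul]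
    simp only [Finsupp.sub_apply, Finsupp.smul_apply, smul_eq_mul]
    rw [ht]; field_simp; ring
  have hz'z : B z' z = 0 := by rw [hsymm z' z]; exact horth
  have hBuu : B (z' - t • z) (z' - t • z) = 0 := by
    rw [B_expand_sub, horth, hz'z, h1, h2]; ring
  have hzero : z' - t • z = 0 :=
    (nonpos_of_coord0 B b hdiag hneg _ hcoord).2 hBuu
  have hz't : z' = t • z := by
    have := sub_eq_zero.mp hzero; exact this
  refine ⟨t, ?_, hz't⟩
  intro ht0
  rw [ht0, zero_smul] at hz't
  exact hz' hz't

lemma contB {N : ℕ} (B : V →ₗ[ℝ] V →ₗ[ℝ] ℝ) (b : Module.Basis (Fin N) ℝ V)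
    (hdiag : ∀ i j, i ≠ j → B (b i) (b j) = 0) :
    Continuous fun p : V × V => B p.1 p.2 := by
  have hc : ∀ i, Continuous fun x : V => b.repr x i := by
    intro i
    exact (b.coord i).continuous_of_finiteDimensional
  have heq : (fun p : V × V => B p.1 p.2)
      = fun p : V × V => ∑ i, B (b i) (b i) * (b.repr p.1 i * b.repr p.2 i) := by
    funext p; exact B_sum B b hdiag p.1 p.2
  rw [heq]
  exact continuous_finset_sum _ fun i _ =>
    continuous_const.mul (((hc i).comp continuous_fst).mul ((hc i).comp continuous_snd))

lemma exists_rep_smul (p : Projectivization ℝ V) (v : V) (hv : v ≠ 0)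
    (h : Projectivization.mk ℝ v hv = p) : ∃ c : ℝ, c ≠ 0 ∧ p.rep = c • v := by
  have h2 : Projectivization.mk ℝ p.rep p.rep_nonzero = Projectivization.mk ℝ v hv := by
    rw [h, Projectivization.mk_rep]
  rw [Projectivization.mk_eq_mk_iff'] at h2
  obtain ⟨c, hc⟩ := h2
  refine ⟨c, ?_, hc.symm⟩
  rintro rfl
  rw [zero_smul] at hc
  exact p.rep_nonzero hc.symm

lemma pmap_mk (γ : V ≃ₗ[ℝ] V) (v : V) (hv : v ≠ 0) :
    pmap γ (Projectivization.mk ℝ v hv)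
      = Projectivization.mk ℝ (γ v) (by simp [hv]) := by
  simp [pmap, Projectivization.map_mk]

/-- Two limits of the same ultrafilter in projective space agree. -/
lemma proj_eq_of_two_limits (x y : Projectivization ℝ V)
    (𝒰 : Ultrafilter (Projectivization ℝ V))
    (hx : ↑𝒰 ≤ nhds x) (hy : ↑𝒰 ≤ nhds y) : x = y := by
  classical
  set e : Module.Basis (Fin (Module.finrank ℝ V)) ℝ V := Module.finBasis ℝ V with he
  have hc : ∀ i, Continuous fun w : V => e.repr w i := by
    intro i
    exact (e.coord i).continuous_of_finiteDimensional
  have key : ∀ i j, ∃ φ : Projectivization ℝ V → ℝ, Continuous φ ∧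
      ∀ (w : V) (hw : w ≠ 0),
        φ (Projectivization.mk ℝ w hw) = e.repr w i * e.repr w j / ‖w‖ ^ 2 := by
    intro i j
    have hwd : ∀ (a b : { v : V // v ≠ 0 }) (t : ℝ), (a : V) = t • (b : V) →
        e.repr a.1 i * e.repr a.1 j / ‖a.1‖ ^ 2
          = e.repr b.1 i * e.repr b.1 j / ‖b.1‖ ^ 2 := by
      rintro ⟨w, hw⟩ ⟨w', hw'⟩ t h
      have ht : t ≠ 0 := by
        rintro rfl; rw [zero_smul] at h; exact hw h
      have hn : ‖t • w'‖ ^ 2 = t ^ 2 * ‖w'‖ ^ 2 := by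
        rw [norm_smul, Real.norm_eq_abs, mul_pow, sq_abs]
      simp only at h ⊢
      rw [h, hn, map_smul, Finsupp.smul_apply, Finsupp.smul_apply, smul_eq_mul]
      have hw'n : ‖w'‖ ≠ 0 := norm_ne_zero_iff.mpr hw'
      field_simp
      ring
    refine ⟨Projectivization.lift
      (fun w : { v : V // v ≠ 0 } => e.repr w.1 i * e.repr w.1 j / ‖w.1‖ ^ 2) hwd, ?_, ?_⟩
    · apply Continuous.quotient_lift
      refine Continuous.div ?_ ?_ ?_
      · exact ((hc i).comp continuous_subtype_val).mul ((hc j).comp continuous_subtype_val)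
      · exact (continuous_norm.comp continuous_subtype_val).pow 2
      · intro w
        exact pow_ne_zero 2 (norm_ne_zero_iff.mpr w.2)
    · intro w hw; rfl
  have hφeq : ∀ i j, e.repr x.rep i * e.repr x.rep j / ‖x.rep‖ ^ 2
      = e.repr y.rep i * e.repr y.rep j / ‖y.rep‖ ^ 2 := by
    intro i j
    obtain ⟨φ, hφc, hφmk⟩ := key i j
    have h1 : Filter.Tendsto φ ↑𝒰 (nhds (φ x)) := (hφc.tendsto x).mono_left hx
    have h2 : Filter.Tendsto φ ↑𝒰 (nhds (φ y)) := (hφc.tendsto y).mono_left hy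
    have h3 : φ x = φ y := tendsto_nhds_unique h1 h2
    have h4 := hφmk x.rep x.rep_nonzero
    have h5 := hφmk y.rep y.rep_nonzero
    rw [Projectivization.mk_rep] at h4 h5
    rw [← h4, ← h5, h3]
  set v := x.rep with hvdef
  set w := y.rep with hwdef
  have hv : v ≠ 0 := x.rep_nonzero
  have hw : w ≠ 0 := y.rep_nonzero
  have hnv : ‖v‖ ^ 2 ≠ 0 := pow_ne_zero 2 (norm_ne_zero_iff.mpr hv)
  have hnw : ‖w‖ ^ 2 ≠ 0 := pow_ne_zero 2 (norm_ne_zero_iff.mpr hw)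
  obtain ⟨i, hi⟩ : ∃ i, e.repr v i ≠ 0 := by
    by_contra hcon
    push_neg at hcon
    exact hv (e.ext_elem fun i => by simp [hcon i])
  have hii := hφeq i i
  have hwi : e.repr w i ≠ 0 := by
    intro h0
    rw [h0, zero_mul, zero_div] at hii
    rcases div_eq_zero_iff.mp hii with h | h
    · exact hi (mul_self_eq_zero.mp h)
    · exact hnv h
  set c := e.repr v i * ‖w‖ ^ 2 / (‖v‖ ^ 2 * e.repr w i) with hcdef
  have hcne : c ≠ 0 :=
    div_ne_zero (mul_ne_zero hi hnw) (mul_ne_zero hnv hwi)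
  have hwc : ∀ j, e.repr w j = c * e.repr v j := by
    intro j
    have hij := (div_eq_div_iff hnv hnw).mp (hφeq i j)
    rw [hcdef, div_mul_eq_mul_div, eq_div_iff (mul_ne_zero hnv hwi)]
    linear_combination -hij
  have hwcv : w = c • v := e.ext_elem fun j => by
    rw [map_smul, Finsupp.smul_apply, smul_eq_mul]; exact hwc j
  have : Projectivization.mk ℝ v hv = Projectivization.mk ℝ w hw := by
    rw [Projectivization.mk_eq_mk_iff']
    exact ⟨c⁻¹, by rw [hwcv, smul_smul, inv_mul_cancel₀ hcne, one_smul]⟩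
  rw [← Projectivization.mk_rep x, ← Projectivization.mk_rep y]
  exact this

end Aux

section Main

set_option maxHeartbeats 2000000 in
lemma limit_mono (n : ℕ) (B : V →ₗ[ℝ] V →ₗ[ℝ] ℝ)
    (hsymm : ∀ x y, B x y = B y x)
    (hsig : hasSigOneN n B)
    (Γ : Subgroup (V ≃ₗ[ℝ] V))
    (hΓ : ∀ γ ∈ Γ, ∀ x y, B (γ x) (γ y) = B x y)
    (a b : Projectivization ℝ V) (ha : a ∈ hypSet B) (hb : b ∈ hypSet B) :
    limitSetOf B Γ a ⊆ limitSetOf B Γ b := by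
  classical
  obtain ⟨e, hdiag, hpos0, hneg⟩ := hsig
  intro x hx
  obtain ⟨hxabs, hxcl⟩ := hx
  have hxq : B x.rep x.rep = 0 := hxabs
  set u := a.rep with hu
  set v := b.rep with hv
  have hu0 : u ≠ 0 := a.rep_nonzero
  have hv0 : v ≠ 0 := b.rep_nonzero
  have hau : (0:ℝ) < B u u := ha
  have hbv : (0:ℝ) < B v v := hb
  haveI : Nontrivial V := nontrivial_of_ne u 0 hu0
  have hγne : ∀ (γ : V ≃ₗ[ℝ] V) (w : V), w ≠ 0 → γ w ≠ 0 := by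
    intro γ w hw
    simpa using (LinearEquiv.map_ne_zero_iff γ).mpr hw
  -- orbit points of b are never equal to x
  have horbposb : ∀ γ ∈ Γ, pmap γ b ≠ x := by
    intro γ hγ hcontra
    have h1 : pmap γ b = Projectivization.mk ℝ (γ v) (hγne γ v hv0) := by
      conv_lhs => rw [← Projectivization.mk_rep b]
      rw [pmap_mk]
    obtain ⟨c, hc, hrep⟩ := exists_rep_smul x (γ v) (hγne γ v hv0) (h1 ▸ hcontra)
    have h2 : B x.rep x.rep = (c * c) * B (γ v) (γ v) := by
      rw [hrep]; exact B_smul_smul B c c (γ v) (γ v)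
    rw [hxq, hΓ γ hγ] at h2
    nlinarith [mul_self_pos.mpr hc]
  -- the cluster filter
  have hclA : x ∈ closure (porbit Γ a) := closure_mono Set.diff_subset hxcl
  have hFne : (nhds x ⊓ Filter.principal (porbit Γ a)).NeBot :=
    mem_closure_iff_clusterPt.mp hclA
  obtain ⟨𝒰, h𝒰⟩ := @Ultrafilter.exists_le _ (nhds x ⊓ Filter.principal (porbit Γ a)) hFne
  have hUx : ↑𝒰 ≤ nhds x := h𝒰.trans inf_le_left
  have hUorb : porbit Γ a ∈ 𝒰 := Filter.le_principal_iff.mp (h𝒰.trans inf_le_right)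
  -- section of the orbit map
  set g : Projectivization ℝ V → (V ≃ₗ[ℝ] V) := fun y =>
    if h : y ∈ porbit Γ a then h.choose else 1 with hg
  have hgspec : ∀ y ∈ porbit Γ a, g y ∈ Γ ∧ pmap (g y) a = y := by
    intro y hy
    have : g y = hy.choose := by rw [hg]; simp only [dif_pos hy]
    rw [this]
    obtain ⟨h1, h2⟩ := hy.choose_spec
    exact ⟨h1, h2.symm⟩
  set 𝒱 : Ultrafilter (V ≃ₗ[ℝ] V) := 𝒰.map g with hVdef
  haveI hVne : ((𝒱 : Filter (V ≃ₗ[ℝ] V)) : Filter (V ≃ₗ[ℝ] V)).NeBot := 𝒱.neBot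
  have hVΓ : ∀ᶠ γ in ((𝒱 : Filter (V ≃ₗ[ℝ] V)) : Filter (V ≃ₗ[ℝ] V)), γ ∈ Γ := by
    rw [hVdef, Ultrafilter.coe_map, Filter.eventually_map]
    filter_upwards [hUorb] with y hy
    exact (hgspec y hy).1
  -- normalized orbit vectors
  set s : (V ≃ₗ[ℝ] V) → V := fun γ => ‖γ u‖⁻¹ • γ u with hs
  set s' : (V ≃ₗ[ℝ] V) → V := fun γ => ‖γ v‖⁻¹ • γ v with hs'
  have hsnorm : ∀ γ, ‖s γ‖ = 1 := by
    intro γ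
    rw [hs]
    simp only [norm_smul, norm_inv, norm_norm]
    field_simp [norm_ne_zero_iff.mpr (hγne γ u hu0)]
  have hs'norm : ∀ γ, ‖s' γ‖ = 1 := by
    intro γ
    rw [hs']
    simp only [norm_smul, norm_inv, norm_norm]
    field_simp [norm_ne_zero_iff.mpr (hγne γ v hv0)]
  have hsne : ∀ γ, s γ ≠ 0 := fun γ => by
    intro h; have := hsnorm γ; rw [h, norm_zero] at this; norm_num at this
  have hs'ne : ∀ γ, s' γ ≠ 0 := fun γ => by
    intro h; have := hs'norm γ; rw [h, norm_zero] at this; norm_num at this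
  have hssph : ∀ γ, s γ ∈ Metric.sphere (0 : V) 1 := fun γ =>
    by rw [mem_sphere_zero_iff_norm]; exact hsnorm γ
  have hs'sph : ∀ γ, s' γ ∈ Metric.sphere (0 : V) 1 := fun γ =>
    by rw [mem_sphere_zero_iff_norm]; exact hs'norm γ
  -- projective identifications
  have hmk_s : ∀ γ, Projectivization.mk ℝ (s γ) (hsne γ) = pmap γ a := by
    intro γ
    have h1 : pmap γ a = Projectivization.mk ℝ (γ u) (hγne γ u hu0) := by
      conv_lhs => rw [← Projectivization.mk_rep a]
      rw [pmap_mk]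
    rw [h1, Projectivization.mk_eq_mk_iff']
    exact ⟨‖γ u‖⁻¹, rfl⟩
  have hmk_s' : ∀ γ, Projectivization.mk ℝ (s' γ) (hs'ne γ) = pmap γ b := by
    intro γ
    have h1 : pmap γ b = Projectivization.mk ℝ (γ v) (hγne γ v hv0) := by
      conv_lhs => rw [← Projectivization.mk_rep b]
      rw [pmap_mk]
    rw [h1, Projectivization.mk_eq_mk_iff']
    exact ⟨‖γ v‖⁻¹, rfl⟩
  -- limits on the sphere
  obtain ⟨z, hzsph, hzle⟩ := (isCompact_sphere (0 : V) 1).ultrafilter_le_nhds (𝒱.map s)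
    (Filter.le_principal_iff.mpr (by
      rw [Ultrafilter.coe_map, Filter.mem_map]
      exact Filter.univ_mem' hssph))
  obtain ⟨z', hz'sph, hz'le⟩ := (isCompact_sphere (0 : V) 1).ultrafilter_le_nhds (𝒱.map s')
    (Filter.le_principal_iff.mpr (by
      rw [Ultrafilter.coe_map, Filter.mem_map]
      exact Filter.univ_mem' hs'sph))
  have hts : Filter.Tendsto s (𝒱 : Filter (V ≃ₗ[ℝ] V)) (nhds z) := by rwa [Ultrafilter.coe_map] at hzle
  have hts' : Filter.Tendsto s' (𝒱 : Filter (V ≃ₗ[ℝ] V)) (nhds z') := by rwa [Ultrafilter.coe_map] at hz'le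
  have hz0 : z ≠ 0 := by
    intro h
    rw [mem_sphere_zero_iff_norm, h, norm_zero] at hzsph
    norm_num at hzsph
  have hz'0 : z' ≠ 0 := by
    intro h
    rw [mem_sphere_zero_iff_norm, h, norm_zero] at hz'sph
    norm_num at hz'sph
  -- tendsto in projective space
  have hmk_tendsto : ∀ (t : (V ≃ₗ[ℝ] V) → V) (zz : V) (hzz : zz ≠ 0)
      (htn : ∀ γ, t γ ≠ 0), Filter.Tendsto t (𝒱 : Filter (V ≃ₗ[ℝ] V)) (nhds zz) →
      Filter.Tendsto (fun γ => Projectivization.mk ℝ (t γ) (htn γ)) (𝒱 : Filter (V ≃ₗ[ℝ] V))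
        (nhds (Projectivization.mk ℝ zz hzz)) := by
    intro t zz hzz htn ht
    have h1 : Filter.Tendsto (fun γ => (⟨t γ, htn γ⟩ : { w : V // w ≠ 0 })) (𝒱 : Filter (V ≃ₗ[ℝ] V))
        (nhds (⟨zz, hzz⟩ : { w : V // w ≠ 0 })) := by
      rw [Topology.IsEmbedding.subtypeVal.tendsto_nhds_iff]
      exact ht
    have h2 : Continuous (Projectivization.mk' ℝ : { w : V // w ≠ 0 } → Projectivization ℝ V) :=
      continuous_quotient_mk'
    exact (h2.tendsto _).comp h1
  -- the ultrafilter is the image of 𝒱 under the orbit map of a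
  have hmapU : Filter.map (fun γ => pmap γ a) (𝒱 : Filter (V ≃ₗ[ℝ] V)) = ↑𝒰 := by
    rw [hVdef, Ultrafilter.coe_map, Filter.map_map]
    have hcong : (fun γ => pmap γ a) ∘ g =ᶠ[↑𝒰] id := by
      filter_upwards [hUorb] with y hy
      exact (hgspec y hy).2
    rw [Filter.map_congr hcong, Filter.map_id]
  -- identify mk z with x
  have hmkz : Projectivization.mk ℝ z hz0 = x := by
    refine proj_eq_of_two_limits _ x 𝒰 ?_ hUx
    have h1 := hmk_tendsto s z hz0 hsne hts
    have hfn : (fun γ => Projectivization.mk ℝ (s γ) (hsne γ)) = fun γ => pmap γ a :=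
      funext hmk_s
    rw [hfn] at h1
    exact hmapU ▸ h1
  -- q(z,z) = 0
  obtain ⟨c, hc0, hcz⟩ := exists_rep_smul x z hz0 hmkz
  have hBzz : B z z = 0 := by
    have h2 : B x.rep x.rep = (c * c) * B z z := by
      rw [hcz]; exact B_smul_smul B c c z z
    rw [hxq] at h2
    rcases mul_eq_zero.mp h2.symm with h | h
    · exact absurd (mul_self_eq_zero.mp h) hc0
    · exact h
  -- continuity of B
  have hBc : Continuous fun p : V × V => B p.1 p.2 := contB B e hdiag
  -- ‖γ u‖⁻¹ → 0
  have hBss : Filter.Tendsto (fun γ => B (s γ) (s γ)) (𝒱 : Filter (V ≃ₗ[ℝ] V)) (nhds 0) := by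
    have h1 := (hBc.tendsto (z, z)).comp (hts.prodMk_nhds hts)
    simpa [hBzz, Function.comp_def] using h1
  have hEv1 : (fun γ => B (s γ) (s γ))
      =ᶠ[(𝒱 : Filter (V ≃ₗ[ℝ] V))] fun γ => (‖γ u‖⁻¹ * ‖γ u‖⁻¹) * B u u := by
    filter_upwards [hVΓ] with γ hγ
    rw [hs]
    simp only
    rw [B_smul_smul, hΓ γ hγ]
  have hinv2 : Filter.Tendsto (fun γ => ‖γ u‖⁻¹ * ‖γ u‖⁻¹) (𝒱 : Filter (V ≃ₗ[ℝ] V)) (nhds 0) := by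
    have h1 : Filter.Tendsto (fun γ => (‖γ u‖⁻¹ * ‖γ u‖⁻¹) * B u u) (𝒱 : Filter (V ≃ₗ[ℝ] V)) (nhds 0) :=
      hBss.congr' hEv1
    have h2 := h1.mul_const (B u u)⁻¹
    rw [zero_mul] at h2
    refine Filter.Tendsto.congr (fun γ => ?_) h2
    rw [mul_assoc, mul_inv_cancel₀ hau.ne', mul_one]
  have hinv : Filter.Tendsto (fun γ => ‖γ u‖⁻¹) (𝒱 : Filter (V ≃ₗ[ℝ] V)) (nhds 0) := by
    have h1 := (Real.continuous_sqrt.tendsto 0).comp hinv2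
    rw [Real.sqrt_zero] at h1
    refine Filter.Tendsto.congr (fun γ => ?_) h1
    exact Real.sqrt_mul_self (inv_nonneg.mpr (norm_nonneg _))
  -- bound for ‖γ v‖⁻¹
  obtain ⟨w₀, hw₀sph, hCmax'⟩ := (isCompact_sphere (0 : V) 1).exists_isMaxOn
    (NormedSpace.sphere_nonempty.mpr zero_le_one)
    ((hBc.comp (continuous_id.prodMk continuous_id)).continuousOn)
  have hCmax : ∀ w ∈ Metric.sphere (0 : V) 1, B w w ≤ B w₀ w₀ := fun w hw => hCmax' hw
  set C := B w₀ w₀ with hC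
  set M := C / B v v with hM
  have hbnd : ∀ γ ∈ Γ, ‖γ v‖⁻¹ * ‖γ v‖⁻¹ ≤ M := by
    intro γ hγ
    have h1 : B (s' γ) (s' γ) ≤ C := hCmax _ (hs'sph γ)
    rw [hs'] at h1
    simp only at h1
    rw [B_smul_smul, hΓ γ hγ] at h1
    rw [hM, le_div_iff₀ hbv]
    exact h1
  obtain ⟨m2, hm2Icc, hm2le⟩ := isCompact_Icc.ultrafilter_le_nhds
    (𝒱.map fun γ => ‖γ v‖⁻¹ * ‖γ v‖⁻¹)
    (Filter.le_principal_iff.mpr (by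
      rw [Ultrafilter.coe_map, Filter.mem_map]
      filter_upwards [hVΓ] with γ hγ
      exact ⟨mul_nonneg (inv_nonneg.mpr (norm_nonneg _)) (inv_nonneg.mpr (norm_nonneg _)),
        hbnd γ hγ⟩))
  have htm2 : Filter.Tendsto (fun γ => ‖γ v‖⁻¹ * ‖γ v‖⁻¹) (𝒱 : Filter (V ≃ₗ[ℝ] V)) (nhds m2) := by
    rwa [Ultrafilter.coe_map] at hm2le
  -- q(z', z') = m2 * q(v,v)
  have hBz' : B z' z' = m2 * B v v := by
    have h1 : Filter.Tendsto (fun γ => B (s' γ) (s' γ)) (𝒱 : Filter (V ≃ₗ[ℝ] V)) (nhds (B z' z')) :=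
      (hBc.tendsto (z', z')).comp (hts'.prodMk_nhds hts')
    have hEv : (fun γ => (‖γ v‖⁻¹ * ‖γ v‖⁻¹) * B v v) =ᶠ[(𝒱 : Filter (V ≃ₗ[ℝ] V))]
        fun γ => B (s' γ) (s' γ) := by
      filter_upwards [hVΓ] with γ hγ
      rw [hs']
      simp only
      rw [B_smul_smul, hΓ γ hγ]
    have h2 : Filter.Tendsto (fun γ => B (s' γ) (s' γ)) (𝒱 : Filter (V ≃ₗ[ℝ] V)) (nhds (m2 * B v v)) :=
      (htm2.mul_const (B v v)).congr' hEv
    exact tendsto_nhds_unique h1 h2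
  -- q(z, z') = 0
  have hBzz' : B z z' = 0 := by
    have h1 : Filter.Tendsto (fun γ => B (s γ) (s' γ)) (𝒱 : Filter (V ≃ₗ[ℝ] V)) (nhds (B z z')) :=
      (hBc.tendsto (z, z')).comp (hts.prodMk_nhds hts')
    have h2 : Filter.Tendsto (fun γ => B (s γ) (s' γ)) (𝒱 : Filter (V ≃ₗ[ℝ] V)) (nhds 0) := by
      apply squeeze_zero_norm'
        (a := fun γ => ‖γ u‖⁻¹ * Real.sqrt (max M 0) * |B u v|)
      · filter_upwards [hVΓ] with γ hγ
        have heq : B (s γ) (s' γ) = (‖γ u‖⁻¹ * ‖γ v‖⁻¹) * B u v := by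
          rw [hs, hs']
          simp only
          rw [B_smul_smul, hΓ γ hγ]
        have h3 : ‖γ v‖⁻¹ ≤ Real.sqrt (max M 0) := by
          rw [← Real.sqrt_mul_self (inv_nonneg.mpr (norm_nonneg (γ v)))]
          exact Real.sqrt_le_sqrt ((hbnd γ hγ).trans (le_max_left _ _))
        rw [heq, Real.norm_eq_abs, abs_mul, abs_mul,
          abs_of_nonneg (inv_nonneg.mpr (norm_nonneg (γ u))),
          abs_of_nonneg (inv_nonneg.mpr (norm_nonneg (γ v)))]
        exact mul_le_mul_of_nonneg_right
          (mul_le_mul_of_nonneg_left h3 (inv_nonneg.mpr (norm_nonneg _)))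
          (abs_nonneg _)
      · have h6 := (hinv.mul_const (Real.sqrt (max M 0))).mul_const |B u v|
        simpa using h6
    exact tendsto_nhds_unique h1 h2
  -- conclude q(z',z') = 0
  have hm2nonneg : (0:ℝ) ≤ m2 := hm2Icc.1
  have hz'null : B z' z' = 0 := by
    rcases eq_or_lt_of_le hm2nonneg with heq | hlt
    · rw [hBz', ← heq, zero_mul]
    · exact absurd hBzz'
        (fun h => pos_not_orth B e hsymm hdiag hneg z z' hz0 hBzz
          (hBz' ▸ mul_pos hlt hbv) h)
  obtain ⟨c', hc'0, hz'c⟩ := null_orth B e hsymm hdiag hneg z z' hz0 hz'0 hBzz hz'null hBzz'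
  have hmkz' : Projectivization.mk ℝ z' hz'0 = x := by
    rw [← hmkz, Projectivization.mk_eq_mk_iff']
    exact ⟨c', hz'c.symm⟩
  -- final conclusion
  refine ⟨hxabs, ?_⟩
  have hdiffb : porbit Γ b \ {x} = porbit Γ b := by
    apply Set.diff_singleton_eq_self
    rintro ⟨γ, hγ, hx'⟩
    exact horbposb γ hγ hx'.symm
  rw [hdiffb, mem_closure_iff_clusterPt]
  have htb : Filter.Tendsto (fun γ => pmap γ b) (𝒱 : Filter (V ≃ₗ[ℝ] V)) (nhds x) := by
    have h1 := hmk_tendsto s' z' hz'0 hs'ne hts'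
    rw [hmkz'] at h1
    have hfn : (fun γ => Projectivization.mk ℝ (s' γ) (hs'ne γ)) = fun γ => pmap γ b :=
      funext hmk_s'
    rwa [hfn] at h1
  have hmemb : porbit Γ b ∈ Filter.map (fun γ => pmap γ b) (𝒱 : Filter (V ≃ₗ[ℝ] V)) := by
    rw [Filter.mem_map]
    filter_upwards [hVΓ] with γ hγ
    exact ⟨γ, hγ, rfl⟩
  have hle : Filter.map (fun γ => pmap γ b) (𝒱 : Filter (V ≃ₗ[ℝ] V))
      ≤ nhds x ⊓ Filter.principal (porbit Γ b) :=
    le_inf htb (Filter.le_principal_iff.mpr hmemb)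
  exact Filter.neBot_of_le hle

end Main

theorem stmt_8 (n : ℕ) (B : V →ₗ[ℝ] V →ₗ[ℝ] ℝ)
    (hsymm : ∀ x y, B x y = B y x)
    (hsig : hasSigOneN n B)
    (Γ : Subgroup (V ≃ₗ[ℝ] V))
    (hΓ : ∀ γ ∈ Γ, ∀ x y, B (γ x) (γ y) = B x y)
    (a b : Projectivization ℝ V) (ha : a ∈ hypSet B) (hb : b ∈ hypSet B) :
    limitSetOf B Γ a = limitSetOf B Γ b := by
  exact le_antisymm (limit_mono n B hsymm hsig Γ hΓ a b ha hb)
    (limit_mono n B hsymm hsig Γ hΓ b a hb ha)
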